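/- arXiv:2307.10116 — 6 statements merged into one kernel-verified Lean document; each statement's English description precedes it below -/
import Mathlib

section
/- Let λ > 0 and let μ be a probability measure on ℝ with μ([0,∞)) = 1 and ρ = λ m₁ ≤ 1. Then for every s > 0, the imaginary part of φ(s) satisfies Im φ(s) = λ ∫ sin(s x) dμ(x) − s ≤ −(1 − ρ) s, and hence |φ(s)| ≥ (1 − ρ) s. Since φ(−s) is the complex conjugate of φ(s), it follows that if ρ < 1 then φ(s) ≠ 0 for every real s ≠ 0. -/
open MeasureTheory

/-- The characteristic function of a measure `μ` on `ℝ`. -/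
noncomputable def charFn (μ : Measure ℝ) (s : ℝ) : ℂ :=
  ∫ x, Complex.exp (Complex.I * s * x) ∂μ

/-- The characteristic exponent `φ(s) = λ(γ(s) − 1) − i s` of the net input process. -/
noncomputable def phi (lam : ℝ) (μ : Measure ℝ) (s : ℝ) : ℂ :=
  lam * (charFn μ s - 1) - Complex.I * s

/-- The `k`-th moment of a measure on `ℝ`. -/
noncomputable def moment (μ : Measure ℝ) (k : ℕ) : ℝ :=
  ∫ x, x ^ k ∂μ

lemma integrable_cexp (μ : Measure ℝ) [IsProbabilityMeasure μ] (s : ℝ) :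
    Integrable (fun x : ℝ => Complex.exp (Complex.I * s * x)) μ := by
  have hb : ∀ x : ℝ, ‖Complex.exp (Complex.I * s * x)‖ ≤ 1 := by
    intro x
    rw [Complex.norm_exp]
    have : (Complex.I * s * x).re = 0 := by simp
    simp [this]
  have hm : AEStronglyMeasurable (fun x : ℝ => Complex.exp (Complex.I * s * x)) μ := by
    apply Continuous.aestronglyMeasurable
    continuity
  exact (integrable_const (1 : ℝ)).mono' hm (Filter.Eventually.of_forall hb)

lemma charFn_im (μ : Measure ℝ) [IsProbabilityMeasure μ] (s : ℝ) :
    (charFn μ s).im = ∫ x, Real.sin (s * x) ∂μ := by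
  have h := integral_im (𝕜 := ℂ) (integrable_cexp μ s)
  rw [charFn]
  rw [RCLike.im_eq_complex_im] at h
  rw [← h]
  congr 1
  ext x
  have : Complex.I * s * x = ((s * x : ℝ) : ℂ) * Complex.I := by push_cast; ring
  rw [this, Complex.exp_ofReal_mul_I_im]

/-- If `ρ = λ m₁ ≤ 1`, then for `s > 0`:
`Im φ(s) = λ ∫ sin(s x) dμ − s ≤ −(1 − ρ) s` and `|φ(s)| ≥ (1 − ρ) s`;
moreover `φ(−s) = conj (φ(s))`, and if `ρ < 1` then `φ(s) ≠ 0` for all real `s ≠ 0`. -/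
theorem phi_im_and_nonzero (lam : ℝ) (hlam : 0 < lam) (μ : Measure ℝ)
    [IsProbabilityMeasure μ] (hsupp : μ (Set.Ici 0) = 1)
    (h1 : Integrable (fun x => x) μ) (hρ : lam * moment μ 1 ≤ 1) :
    (∀ s : ℝ, 0 < s →
      (phi lam μ s).im = lam * (∫ x, Real.sin (s * x) ∂μ) - s ∧
      (phi lam μ s).im ≤ -((1 - lam * moment μ 1) * s) ∧
      (1 - lam * moment μ 1) * s ≤ ‖phi lam μ s‖) ∧
    (∀ s : ℝ, phi lam μ (-s) = starRingEnd ℂ (phi lam μ s)) ∧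
    (lam * moment μ 1 < 1 → ∀ s : ℝ, s ≠ 0 → phi lam μ s ≠ 0) := by
  have hae : ∀ᵐ x ∂μ, (0 : ℝ) ≤ x := by
    have : μ (Set.Ici (0 : ℝ))ᶜ = 0 :=
      (prob_compl_eq_zero_iff measurableSet_Ici).mpr hsupp
    filter_upwards [measure_eq_zero_iff_ae_notMem.mp this] with x hx
    simpa [Set.mem_Ici] using hx
  have hmom : moment μ 1 = ∫ x, x ∂μ := by
    simp [moment]
  have key : ∀ s : ℝ, 0 < s →
      (phi lam μ s).im = lam * (∫ x, Real.sin (s * x) ∂μ) - s ∧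
      (phi lam μ s).im ≤ -((1 - lam * moment μ 1) * s) ∧
      (1 - lam * moment μ 1) * s ≤ ‖phi lam μ s‖ := by
    intro s hs
    have him : (phi lam μ s).im = lam * (∫ x, Real.sin (s * x) ∂μ) - s := by
      simp [phi, charFn_im]
    have hsin_int : Integrable (fun x => Real.sin (s * x)) μ := by
      have hm : AEStronglyMeasurable (fun x : ℝ => Real.sin (s * x)) μ :=
        (Real.continuous_sin.comp (continuous_const.mul continuous_id)).aestronglyMeasurable
      refine (integrable_const (1 : ℝ)).mono' hm (Filter.Eventually.of_forall fun x => ?_)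
      simpa using Real.abs_sin_le_one (s * x)
    have hle : (∫ x, Real.sin (s * x) ∂μ) ≤ s * moment μ 1 := by
      have : (∫ x, Real.sin (s * x) ∂μ) ≤ ∫ x, s * x ∂μ := by
        refine integral_mono_ae hsin_int (h1.const_mul s) ?_
        filter_upwards [hae] with x hx
        exact Real.sin_le (mul_nonneg hs.le hx)
      rwa [integral_const_mul, ← hmom] at this
    have h2 : (phi lam μ s).im ≤ -((1 - lam * moment μ 1) * s) := by
      rw [him]
      have := mul_le_mul_of_nonneg_left hle hlam.le
      nlinarith
    refine ⟨him, h2, ?_⟩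
    calc (1 - lam * moment μ 1) * s ≤ -(phi lam μ s).im := by linarith
      _ ≤ |(phi lam μ s).im| := neg_le_abs _
      _ ≤ ‖phi lam μ s‖ := Complex.abs_im_le_norm _
  have hconj : ∀ s : ℝ, phi lam μ (-s) = starRingEnd ℂ (phi lam μ s) := by
    intro s
    have hc : charFn μ (-s) = starRingEnd ℂ (charFn μ s) := by
      rw [charFn, charFn, ← integral_conj]
      congr 1
      ext x
      rw [← Complex.exp_conj]
      congr 1
      simp [Complex.conj_I]
    simp [phi, hc, map_mul, map_sub, Complex.conj_I]
  refine ⟨key, hconj, ?_⟩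
  intro hρ' s hs
  rcases hs.lt_or_gt with h | h
  · intro h0
    have hc := hconj (-s)
    rw [neg_neg, h0] at hc
    have h0' : phi lam μ (-s) = 0 := by
      have := congrArg (starRingEnd ℂ) hc
      simpa using this.symm
    have habs := (key (-s) (by linarith)).2.2
    rw [h0'] at habs
    simp at habs
    have hpos : (0 : ℝ) < (1 - lam * moment μ 1) * (-s) :=
      mul_pos (by linarith) (by linarith)
    linarith
  · intro h0
    have := (key s h).2.2
    rw [h0] at this
    simp at this
    have hpos : (0 : ℝ) < (1 - lam * moment μ 1) * s := mul_pos (by linarith) h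
    linarith
end

section
/- Let λ > 0, δ ∈ (0,1), and let μ be a probability measure on ℝ with μ([0,∞)) = 1, λ m₁ ≤ 1 − δ, and m₂ < ∞. Then for every s > 0 one has |s φ(s) − s² φ′(s)| ≤ (λ m₂ / 2) s³, and consequently |s φ(s) − s² φ′(s)| / |φ(s)|³ ≤ λ m₂ / (2 δ³). -/
open MeasureTheory

/-- The derivative of the characteristic exponent: `φ′(s) = λ ∫ i x exp(i s x) dμ(x) − i`. -/
noncomputable def phiDeriv (lam : ℝ) (μ : Measure ℝ) (s : ℝ) : ℂ :=
  lam * ∫ x, Complex.I * x * Complex.exp (Complex.I * s * x) ∂μ - Complex.I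

lemma aux_ptwise (u : ℝ) (hu : 0 ≤ u) :
    ‖Complex.exp (Complex.I * u) - 1 - Complex.I * u * Complex.exp (Complex.I * u)‖
      ≤ u ^ 2 / 2 := by
  have hderiv : ∀ t : ℝ, HasDerivAt
      (fun t : ℝ => Complex.exp (Complex.I * t) - 1 - Complex.I * t * Complex.exp (Complex.I * t))
      ((t : ℂ) * Complex.exp (Complex.I * t)) t := by
    intro t
    have hre : HasDerivAt (fun t : ℝ => (t : ℂ)) 1 t := by
      simpa using (hasDerivAt_id t).ofReal_comp
    have he : HasDerivAt (fun t : ℝ => Complex.exp (Complex.I * t))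
        (Complex.I * Complex.exp (Complex.I * t)) t := by
      have := (hre.const_mul Complex.I).cexp
      simpa [mul_comm] using this
    have hprod : HasDerivAt (fun t : ℝ => Complex.I * t * Complex.exp (Complex.I * t))
        (Complex.I * 1 * Complex.exp (Complex.I * t)
          + Complex.I * t * (Complex.I * Complex.exp (Complex.I * t))) t :=
      (hre.const_mul Complex.I).mul he
    have := (he.sub_const 1).sub hprod
    refine this.congr_deriv ?_
    have : (Complex.I : ℂ) * Complex.I = -1 := Complex.I_mul_I
    linear_combination -((t:ℂ) * Complex.exp (Complex.I * t)) * this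
  have hint : ∀ t : ℝ, t ∈ Set.uIcc (0:ℝ) u →
      HasDerivAt (fun t : ℝ => Complex.exp (Complex.I * t) - 1 - Complex.I * t * Complex.exp (Complex.I * t)) ((t:ℂ) * Complex.exp (Complex.I * t)) t := fun t _ => hderiv t
  have hcont : IntervalIntegrable (fun t : ℝ => (t:ℂ) * Complex.exp (Complex.I * t)) volume 0 u := by
    apply Continuous.intervalIntegrable
    continuity
  have heq := intervalIntegral.integral_eq_sub_of_hasDerivAt hint hcont
  have heq' : (∫ t in (0:ℝ)..u, (t:ℂ) * Complex.exp (Complex.I * t))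
      = Complex.exp (Complex.I * u) - 1 - Complex.I * u * Complex.exp (Complex.I * u) := by
    rw [heq]; simp
  rw [← heq']
  have hb : IntervalIntegrable (fun t : ℝ => t) volume 0 u :=
    Continuous.intervalIntegrable (by continuity) 0 u
  have hbd : ∀ᵐ (t:ℝ) ∂(volume.restrict (Set.uIoc (0:ℝ) u)),
      ‖(t:ℂ) * Complex.exp (Complex.I * t)‖ ≤ t := by
    filter_upwards [MeasureTheory.ae_restrict_mem measurableSet_uIoc] with t ht
    rw [Set.uIoc_of_le hu] at ht
    have h1 : ‖Complex.exp (Complex.I * t)‖ = 1 := by simp [Complex.norm_exp]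
    simp only [norm_mul, h1, mul_one, Complex.norm_real, Real.norm_eq_abs]
    rw [_root_.abs_of_nonneg ht.1.le]
  have hnorm := intervalIntegral.norm_integral_le_of_norm_le
    (f := fun t : ℝ => (t:ℂ) * Complex.exp (Complex.I * t)) (g := fun t : ℝ => t)
    (μ := volume) (a := 0) (b := u) hu
    (by rw [← Set.uIoc_of_le hu]; exact (ae_restrict_iff' measurableSet_uIoc).1 hbd) hb
  have hI : |∫ t in (0:ℝ)..u, t| = u ^ 2 / 2 := by
    rw [integral_id, _root_.abs_of_nonneg (by nlinarith [sq_nonneg u])]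
    ring
  rw [integral_id] at hnorm
  exact hnorm.trans_eq (by ring)

/-- If `λ m₁ ≤ 1 − δ` and `m₂ < ∞`, then for `s > 0`,
`|s φ(s) − s² φ′(s)| ≤ (λ m₂ / 2) s³`, and consequently
`|s φ(s) − s² φ′(s)| / |φ(s)|³ ≤ λ m₂ / (2 δ³)`. -/
theorem abs_s_phi_sub_sq_phiDeriv (lam : ℝ) (hlam : 0 < lam) (δ : ℝ)
    (hδ : δ ∈ Set.Ioo (0 : ℝ) 1) (μ : Measure ℝ) [IsProbabilityMeasure μ]
    (hsupp : μ (Set.Ici 0) = 1)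
    (h1 : Integrable (fun x => x) μ) (h2 : Integrable (fun x => x ^ 2) μ)
    (hρ : lam * moment μ 1 ≤ 1 - δ) :
    ∀ s : ℝ, 0 < s →
      ‖(s : ℂ) * phi lam μ s - (s : ℂ) ^ 2 * phiDeriv lam μ s‖
        ≤ lam * moment μ 2 / 2 * s ^ 3 ∧
      ‖(s : ℂ) * phi lam μ s - (s : ℂ) ^ 2 * phiDeriv lam μ s‖
          / ‖phi lam μ s‖ ^ 3
        ≤ lam * moment μ 2 / (2 * δ ^ 3) := by
  obtain ⟨hδ0, hδ1⟩ := hδ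
  intro s hs
  -- a.e. nonneg
  have hae : ∀ᵐ x ∂μ, (0:ℝ) ≤ x := by
    have hc : μ (Set.Ici (0:ℝ))ᶜ = 0 := by
      rw [measure_compl measurableSet_Ici (measure_ne_top μ _), hsupp, measure_univ]
      simp
    have hset : {x : ℝ | ¬ (0:ℝ) ≤ x} = (Set.Ici (0:ℝ))ᶜ := by
      ext x; simp
    rw [ae_iff, hset]
    exact hc
  have hmexp : ∀ x : ℝ, ‖Complex.exp (Complex.I * s * x)‖ = 1 := by
    intro x; simp [Complex.norm_exp]
  have hcont_exp : Continuous (fun x : ℝ => Complex.exp (Complex.I * s * x)) := by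
    continuity
  have hi_exp : Integrable (fun x : ℝ => Complex.exp (Complex.I * s * x)) μ := by
    apply Integrable.mono' (integrable_const (1:ℝ)) hcont_exp.aestronglyMeasurable
    filter_upwards with x
    rw [hmexp]
  have hi_xexp : Integrable (fun x : ℝ => Complex.I * x * Complex.exp (Complex.I * s * x)) μ := by
    apply Integrable.mono' h1.abs
    · exact (by continuity : Continuous fun x : ℝ => Complex.I * x * Complex.exp (Complex.I * s * x)).aestronglyMeasurable
    · filter_upwards with x
      simp only [norm_mul, hmexp, mul_one, Complex.norm_I, one_mul,
        Complex.norm_real, Real.norm_eq_abs]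
      exact le_rfl
  set g : ℝ → ℂ := fun x =>
    Complex.exp (Complex.I * s * x) - 1 - (s:ℂ) * (Complex.I * x * Complex.exp (Complex.I * s * x))
    with hgdef
  have hgint : Integrable g μ := (hi_exp.sub (integrable_const 1)).sub (hi_xexp.const_mul _)
  have hginteq : ∫ x, g x ∂μ = (∫ x, Complex.exp (Complex.I * s * x) ∂μ) - 1
      - (s:ℂ) * ∫ x, Complex.I * x * Complex.exp (Complex.I * s * x) ∂μ := by
    have i1 : Integrable (fun x : ℝ => Complex.exp (Complex.I * s * x) - 1) μ :=
      hi_exp.sub (integrable_const 1)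
    have i2 : Integrable
        (fun x : ℝ => (s:ℂ) * (Complex.I * x * Complex.exp (Complex.I * s * x))) μ :=
      hi_xexp.const_mul _
    rw [hgdef]
    rw [integral_sub i1 i2, integral_sub hi_exp (integrable_const 1),
      integral_const_mul, integral_const]
    simp
  have hid : (s : ℂ) * phi lam μ s - (s : ℂ) ^ 2 * phiDeriv lam μ s
      = (lam : ℂ) * s * ∫ x, g x ∂μ := by
    rw [hginteq]
    unfold phi phiDeriv charFn
    ring
  have hm2 : 0 ≤ moment μ 2 := integral_nonneg fun x => by positivity
  have hb1 : ‖∫ x, g x ∂μ‖ ≤ s ^ 2 / 2 * moment μ 2 := by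
    calc ‖∫ x, g x ∂μ‖ ≤ ∫ x, ‖g x‖ ∂μ := by
          exact norm_integral_le_integral_norm _
      _ ≤ ∫ x, s ^ 2 / 2 * x ^ 2 ∂μ := by
          apply integral_mono_ae hgint.norm (h2.const_mul _)
          filter_upwards [hae] with x hx
          have key := aux_ptwise (s * x) (mul_nonneg hs.le hx)
          have harg : Complex.I * ((s * x : ℝ) : ℂ) = Complex.I * s * x := by
            push_cast; ring
          rw [harg] at key
          have hco : g x = Complex.exp (Complex.I * s * x) - 1
              - Complex.I * s * x * Complex.exp (Complex.I * s * x) := by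
            rw [hgdef]; ring
          rw [hco]
          exact key.trans_eq (by ring)
      _ = s ^ 2 / 2 * moment μ 2 := by
          rw [integral_const_mul]; rfl
  have hA : ‖(s : ℂ) * phi lam μ s - (s : ℂ) ^ 2 * phiDeriv lam μ s‖
      ≤ lam * moment μ 2 / 2 * s ^ 3 := by
    rw [hid, norm_mul, norm_mul, Complex.norm_real, Complex.norm_real, Real.norm_eq_abs,
      Real.norm_eq_abs,
      _root_.abs_of_nonneg hlam.le, _root_.abs_of_nonneg hs.le]
    calc lam * s * ‖∫ x, g x ∂μ‖
        ≤ lam * s * (s ^ 2 / 2 * moment μ 2) := by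
          apply mul_le_mul_of_nonneg_left hb1 (by positivity)
      _ = lam * moment μ 2 / 2 * s ^ 3 := by ring
  -- lower bound for |phi|
  have hsin_int : Integrable (fun x => Real.sin (s * x)) μ := by
    apply Integrable.mono' (integrable_const (1:ℝ))
      ((Real.continuous_sin.comp (continuous_const.mul continuous_id)).aestronglyMeasurable)
    filter_upwards with x
    rw [Real.norm_eq_abs]
    exact abs_le.2 ⟨Real.neg_one_le_sin _, Real.sin_le_one _⟩
  have him_exp : ∀ x : ℝ, (Complex.exp (Complex.I * s * x)).im = Real.sin (s * x) := by
    intro x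
    rw [Complex.exp_im]
    simp [Complex.mul_re, Complex.mul_im]
  have him : (phi lam μ s).im = lam * (∫ x, Real.sin (s * x) ∂μ) - s := by
    unfold phi charFn
    have : (∫ x, Complex.exp (Complex.I * s * x) ∂μ).im = ∫ x, Real.sin (s * x) ∂μ := by
      have h5 := integral_im (𝕜 := ℂ) hi_exp
      simp only [RCLike.im_to_complex] at h5
      rw [← h5]
      exact integral_congr_ae (Filter.Eventually.of_forall fun x => him_exp x)
    simp [Complex.sub_im, Complex.mul_im, Complex.mul_re, this]
  have hsin_le : ∫ x, Real.sin (s * x) ∂μ ≤ s * moment μ 1 := by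
    have h := integral_mono_ae hsin_int (h1.const_mul s) ?_
    · rw [integral_const_mul] at h
      exact h.trans_eq (by rw [moment]; norm_num)
    · filter_upwards [hae] with x hx
      exact Real.sin_le (mul_nonneg hs.le hx)
  have hphilb : δ * s ≤ ‖phi lam μ s‖ := by
    have h3 : (phi lam μ s).im ≤ -(δ * s) := by
      rw [him]
      have h4 : lam * (∫ x, Real.sin (s * x) ∂μ) ≤ lam * (s * moment μ 1) :=
        mul_le_mul_of_nonneg_left hsin_le hlam.le
      nlinarith
    calc δ * s ≤ |(phi lam μ s).im| := le_abs.2 (Or.inr (by linarith))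
      _ ≤ ‖phi lam μ s‖ := Complex.abs_im_le_norm _
  refine ⟨hA, ?_⟩
  have hden : (δ * s) ^ 3 ≤ ‖phi lam μ s‖ ^ 3 :=
    pow_le_pow_left₀ (by positivity) hphilb 3
  have hnum0 : 0 ≤ lam * moment μ 2 / 2 * s ^ 3 :=
    mul_nonneg (div_nonneg (mul_nonneg hlam.le hm2) (by norm_num)) (by positivity)
  calc ‖(s : ℂ) * phi lam μ s - (s : ℂ) ^ 2 * phiDeriv lam μ s‖
        / ‖phi lam μ s‖ ^ 3
      ≤ (lam * moment μ 2 / 2 * s ^ 3) / ((δ * s) ^ 3) :=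
        div_le_div₀ hnum0 hA (by positivity) hden
    _ = lam * moment μ 2 / (2 * δ ^ 3) := by
        field_simp
end

section
/- Fix λ > 0, δ ∈ (0,1), and M ∈ (0,∞). For s > 0 and μ ∈ 𝒢(δ, M) define κ₁(s; μ) = (s (1 − ρ) / φ(−s)) · ( φ′(0) (s φ(s) − s² φ′(s)) / φ(s)³ + s φ′(0) λ m₂ / (2 φ(s) (1 − ρ)²) ). Then there exists a constant 0 < K₁ < ∞ such that |κ₁(s; μ)| ≤ K₁ for every μ ∈ 𝒢(δ, M) and every s > 0. -/
open MeasureTheory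

noncomputable def Complex.abs : AbsoluteValue ℂ ℝ := IsAbsoluteValue.toAbsoluteValue (norm : ℂ → ℝ)

lemma Complex.norm_eq_abs (z : ℂ) : ‖z‖ = Complex.abs z := rfl

@[simp] lemma Complex.abs_ofReal (r : ℝ) : Complex.abs r = |r| := by
  rw [← Complex.norm_eq_abs, Complex.norm_real, Real.norm_eq_abs]

@[simp] lemma Complex.abs_I : Complex.abs Complex.I = 1 := by
  rw [← Complex.norm_eq_abs, Complex.norm_I]

@[simp] lemma Complex.abs_two : Complex.abs 2 = 2 := by
  rw [← Complex.norm_eq_abs]; norm_num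

@[simp] lemma Complex.abs_conj (z : ℂ) : Complex.abs ((starRingEnd ℂ) z) = Complex.abs z := by
  rw [← Complex.norm_eq_abs, ← Complex.norm_eq_abs, Complex.norm_conj]

@[simp] lemma Complex.abs_exp_ofReal_mul_I (x : ℝ) : Complex.abs (Complex.exp (x * Complex.I)) = 1 := by
  rw [← Complex.norm_eq_abs, Complex.norm_exp_ofReal_mul_I]

lemma Complex.abs_im_le_abs (z : ℂ) : |z.im| ≤ Complex.abs z := Complex.abs_im_le_norm z

lemma aux_exp_sub_one (u : ℝ) : Complex.abs (Complex.exp (u * Complex.I) - 1) ≤ |u| := by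
  have hd : ∀ t ∈ Set.uIcc (0:ℝ) u, HasDerivAt (fun t : ℝ => Complex.exp (t * Complex.I) - 1)
      (Complex.exp (t * Complex.I) * Complex.I) t := by
    intro t _
    have h : HasDerivAt (fun z : ℂ => Complex.exp (z * Complex.I))
        (Complex.exp ((t:ℂ) * Complex.I) * Complex.I) (t:ℂ) := by
      simpa using ((hasDerivAt_id ((t:ℝ):ℂ)).mul_const Complex.I).cexp
    exact (h.comp_ofReal).sub_const 1
  have hint : IntervalIntegrable (fun t : ℝ => Complex.exp (t * Complex.I) * Complex.I)
      MeasureTheory.volume 0 u := by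
    apply Continuous.intervalIntegrable
    continuity
  have h := intervalIntegral.integral_eq_sub_of_hasDerivAt hd hint
  have h2 : Complex.exp (u * Complex.I) - 1 = ∫ t in (0:ℝ)..u, Complex.exp (t * Complex.I) * Complex.I := by
    rw [h]; simp
  rw [h2, ← Complex.norm_eq_abs]
  have := intervalIntegral.norm_integral_le_of_norm_le_const
    (C := 1) (f := fun t : ℝ => Complex.exp (t * Complex.I) * Complex.I) (a := (0:ℝ)) (b := u) ?_
  · simpa using this
  · intro x _
    simp [Complex.norm_eq_abs, map_mul, Complex.abs_exp_ofReal_mul_I]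

lemma aux_taylor2_nonneg (u : ℝ) (hu : 0 ≤ u) :
    Complex.abs (Complex.exp (u * Complex.I) - 1 - u * Complex.I) ≤ u ^ 2 / 2 := by
  have hd : ∀ t ∈ Set.uIcc (0:ℝ) u, HasDerivAt
      (fun t : ℝ => Complex.exp (t * Complex.I) - 1 - t * Complex.I)
      ((Complex.exp (t * Complex.I) - 1) * Complex.I) t := by
    intro t _
    have h : HasDerivAt (fun z : ℂ => Complex.exp (z * Complex.I))
        (Complex.exp ((t:ℂ) * Complex.I) * Complex.I) (t:ℂ) := by
      simpa using ((hasDerivAt_id ((t:ℝ):ℂ)).mul_const Complex.I).cexp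
    have h2 : HasDerivAt (fun t : ℝ => (t:ℂ) * Complex.I) Complex.I t := by
      simpa using (Complex.ofRealCLM.hasDerivAt (x := t)).mul_const Complex.I
    have := ((h.comp_ofReal).sub_const 1).sub h2
    convert this using 1
    · rfl
    · rfl
    · ring
  have hint : IntervalIntegrable (fun t : ℝ => (Complex.exp (t * Complex.I) - 1) * Complex.I)
      MeasureTheory.volume 0 u := by
    apply Continuous.intervalIntegrable
    continuity
  have h := intervalIntegral.integral_eq_sub_of_hasDerivAt hd hint
  have h2 : Complex.exp (u * Complex.I) - 1 - u * Complex.I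
      = ∫ t in (0:ℝ)..u, (Complex.exp (t * Complex.I) - 1) * Complex.I := by
    rw [h]; simp
  rw [h2, ← Complex.norm_eq_abs]
  have hb : ∀ᵐ (t : ℝ) ∂(MeasureTheory.volume.restrict (Set.uIoc (0:ℝ) u)),
      ‖(Complex.exp ((t:ℂ) * Complex.I) - 1) * Complex.I‖ ≤ |t| := by
    filter_upwards with t
    simpa [Complex.norm_eq_abs, map_mul] using aux_exp_sub_one t
  have habs : IntervalIntegrable (fun t : ℝ => |t|) MeasureTheory.volume 0 u := by
    apply Continuous.intervalIntegrable; continuity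
  have := intervalIntegral.norm_integral_le_of_norm_le
    (f := fun t : ℝ => (Complex.exp ((t:ℂ) * Complex.I) - 1) * Complex.I) hu
    (by filter_upwards with t _; simpa [Complex.norm_eq_abs, map_mul] using aux_exp_sub_one t) habs
  refine this.trans ?_
  have : (∫ t in (0:ℝ)..u, |t|) = u ^ 2 / 2 := by
    rw [intervalIntegral.integral_congr (g := fun t : ℝ => t) ?_]
    · rw [integral_id]; ring
    · intro t ht
      rw [Set.uIcc_of_le hu] at ht
      exact abs_of_nonneg ht.1
  rw [this]

lemma aux_taylor2 (u : ℝ) :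
    Complex.abs (Complex.exp (u * Complex.I) - 1 - u * Complex.I) ≤ u ^ 2 / 2 := by
  rcases le_or_gt 0 u with hu | hu
  · exact aux_taylor2_nonneg u hu
  · have h := aux_taylor2_nonneg (-u) (by linarith)
    have hconj : Complex.exp ((-u : ℝ) * Complex.I) - 1 - (-u : ℝ) * Complex.I
        = (starRingEnd ℂ) (Complex.exp (u * Complex.I) - 1 - u * Complex.I) := by
      simp only [map_sub, map_mul, ← Complex.exp_conj]
      simp [Complex.conj_I]
    rw [hconj, Complex.abs_conj] at h
    calc Complex.abs (Complex.exp (u * Complex.I) - 1 - u * Complex.I) ≤ (-u) ^ 2 / 2 := h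
      _ = u ^ 2 / 2 := by ring

lemma aux_key (v : ℝ) (hv : 0 ≤ v) :
    Complex.abs (Complex.exp (v * Complex.I) - 1 - (v * Complex.I) * Complex.exp (v * Complex.I))
      ≤ v ^ 2 / 2 := by
  have hid : Complex.exp (v * Complex.I) - 1 - (v * Complex.I) * Complex.exp (v * Complex.I)
      = -(Complex.exp (v * Complex.I) * (Complex.exp ((-v : ℝ) * Complex.I) - 1 - (-v : ℝ) * Complex.I)) := by
    have : Complex.exp ((-v : ℝ) * Complex.I) = (Complex.exp ((v:ℝ) * Complex.I))⁻¹ := by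
      rw [← Complex.exp_neg]
      congr 1
      push_cast
      ring
    rw [this]
    have hne : Complex.exp ((v:ℂ) * Complex.I) ≠ 0 := Complex.exp_ne_zero _
    field_simp
    push_cast
    ring
  rw [hid, map_neg_eq_map, map_mul, Complex.abs_exp_ofReal_mul_I, one_mul]
  have := aux_taylor2 (-v)
  calc Complex.abs _ ≤ (-v) ^ 2 / 2 := this
    _ = v ^ 2 / 2 := by ring


section meas
variable (μ : Measure ℝ) [IsProbabilityMeasure μ]

lemma aux_ae_nonneg (h : μ (Set.Ici 0) = 1) : ∀ᵐ x ∂μ, 0 ≤ x := by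
  have hc : μ {x : ℝ | ¬ 0 ≤ x} = 0 := by
    have he : {x : ℝ | ¬ 0 ≤ x} = (Set.Ici (0:ℝ))ᶜ := by ext x; simp [not_le]
    rw [he, measure_compl measurableSet_Ici (by simp), h]
    simp
  exact hc

lemma aux_int_cexp (s : ℝ) : Integrable (fun x : ℝ => Complex.exp (Complex.I * s * x)) μ := by
  refine Integrable.mono' (integrable_const 1) ?_ (Filter.Eventually.of_forall fun x => ?_)
  · exact (Continuous.cexp (by continuity)).aestronglyMeasurable
  · have h : Complex.I * s * x = ((s * x : ℝ) : ℂ) * Complex.I := by push_cast; ring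
    rw [Complex.norm_eq_abs, h, Complex.abs_exp_ofReal_mul_I]

lemma aux_int_xcexp (s : ℝ) (h1 : Integrable (fun x : ℝ => x) μ) :
    Integrable (fun x : ℝ => Complex.I * x * Complex.exp (Complex.I * s * x)) μ := by
  refine Integrable.mono' h1.abs ?_ (Filter.Eventually.of_forall fun x => ?_)
  · exact ((Continuous.mul (by continuity) (Continuous.cexp (by continuity)))).aestronglyMeasurable
  · have h : Complex.I * s * x = ((s * x : ℝ) : ℂ) * Complex.I := by push_cast; ring
    rw [Complex.norm_eq_abs, map_mul, map_mul, Complex.abs_I, one_mul, Complex.abs_ofReal, h,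
      Complex.abs_exp_ofReal_mul_I, mul_one]

lemma aux_int_sin (s : ℝ) : Integrable (fun x : ℝ => Real.sin (s * x)) μ := by
  refine Integrable.mono' (integrable_const 1) ?_ (Filter.Eventually.of_forall fun x => ?_)
  · exact (by continuity : Continuous fun x : ℝ => Real.sin (s * x)).aestronglyMeasurable
  · rw [Real.norm_eq_abs]; exact Real.abs_sin_le_one _ |>.trans (le_refl 1)

lemma aux_charFn_im (s : ℝ) : (charFn μ s).im = ∫ x, Real.sin (s * x) ∂μ := by
  have h0 := integral_im (𝕜 := ℂ) (aux_int_cexp μ s)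
  simp only [RCLike.im_to_complex] at h0
  rw [charFn, ← h0]
  congr 1
  ext x
  have h : Complex.I * s * x = ((s * x : ℝ) : ℂ) * Complex.I := by push_cast; ring
  rw [h, Complex.exp_ofReal_mul_I_im]

lemma aux_phi_im (lam s : ℝ) :
    (phi lam μ s).im = lam * (∫ x, Real.sin (s * x) ∂μ) - s := by
  rw [phi, Complex.sub_im, Complex.im_ofReal_mul, Complex.sub_im, Complex.one_im,
    aux_charFn_im, Complex.mul_im]
  simp

end meas

section meas2
variable (μ : Measure ℝ) [IsProbabilityMeasure μ]

lemma aux_phiDeriv_zero (lam : ℝ) (h1 : Integrable (fun x : ℝ => x) μ) :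
    phiDeriv lam μ 0 = ((lam : ℂ) * (moment μ 1 : ℂ) - 1) * Complex.I := by
  have h2 : (fun x : ℝ => Complex.I * x * Complex.exp (Complex.I * (0:ℝ) * x))
      = fun x : ℝ => Complex.I * (x : ℂ) := by
    ext x; simp
  have h3 : ∫ x, Complex.I * (x : ℂ) ∂μ = Complex.I * (moment μ 1 : ℂ) := by
    rw [MeasureTheory.integral_const_mul]
    congr 1
    rw [show (∫ (a:ℝ), ((a:ℝ):ℂ) ∂μ) = ((∫ a, a ∂μ : ℝ) : ℂ) from integral_ofReal]
    simp [moment]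
  rw [phiDeriv, h2, h3]
  ring

lemma aux_D_repr (lam s : ℝ) (h1 : Integrable (fun x : ℝ => x) μ) :
    phi lam μ s - (s : ℂ) * phiDeriv lam μ s
      = (lam : ℂ) * ∫ x, (Complex.exp (Complex.I * s * x) - 1
          - Complex.I * s * x * Complex.exp (Complex.I * s * x)) ∂μ := by
  have hint1 := aux_int_cexp μ s
  have hint2 := aux_int_xcexp μ s h1
  have hint2' : Integrable (fun x : ℝ => (s : ℂ) * (Complex.I * x * Complex.exp (Complex.I * s * x))) μ :=
    hint2.const_mul _
  have hpt : ∀ x : ℝ, Complex.exp (Complex.I * s * x) - 1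
      - Complex.I * s * x * Complex.exp (Complex.I * s * x)
      = (Complex.exp (Complex.I * s * x) - 1)
        - (s:ℂ) * (Complex.I * x * Complex.exp (Complex.I * s * x)) := by
    intro x; ring
  simp only [hpt]
  have hsub : Integrable (fun x : ℝ => Complex.exp (Complex.I * s * x) - 1) μ :=
    hint1.sub (integrable_const 1)
  rw [integral_sub hsub hint2',
    integral_sub hint1 (integrable_const 1), MeasureTheory.integral_const_mul]
  simp only [integral_const, measure_univ, ENNReal.toReal_one, probReal_univ, one_smul]
  rw [phi, phiDeriv, charFn]
  ring

end meas2

section meas3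
variable (μ : Measure ℝ) [IsProbabilityMeasure μ]

lemma aux_sin_int_le (s : ℝ) (hs : 0 ≤ s) (h0 : ∀ᵐ x ∂μ, 0 ≤ x)
    (h1 : Integrable (fun x : ℝ => x) μ) :
    ∫ x, Real.sin (s * x) ∂μ ≤ s * moment μ 1 := by
  have h2 : Integrable (fun x : ℝ => s * x) μ := h1.const_mul s
  have := integral_mono_ae (aux_int_sin μ s) h2 ?_
  · refine this.trans ?_
    rw [MeasureTheory.integral_const_mul]
    have : moment μ 1 = ∫ x, x ∂μ := by simp [moment]
    rw [this]
  · filter_upwards [h0] with x hx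
    exact Real.sin_le (mul_nonneg hs hx)

lemma aux_D_bound (lam s : ℝ) (hs : 0 ≤ s) (h0 : ∀ᵐ x ∂μ, 0 ≤ x) (hlam : 0 ≤ lam)
    (h1 : Integrable (fun x : ℝ => x) μ) (h2 : Integrable (fun x : ℝ => x ^ 2) μ) :
    Complex.abs (phi lam μ s - (s : ℂ) * phiDeriv lam μ s)
      ≤ lam * (s ^ 2 / 2 * moment μ 2) := by
  rw [aux_D_repr μ lam s h1, ← Complex.norm_eq_abs, norm_mul, Complex.norm_real,
    Real.norm_eq_abs, abs_of_nonneg hlam]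
  have hb : ‖∫ x, (Complex.exp (Complex.I * s * x) - 1
      - Complex.I * s * x * Complex.exp (Complex.I * s * x)) ∂μ‖
      ≤ ∫ x, (s ^ 2 / 2 * x ^ 2) ∂μ := by
    refine MeasureTheory.norm_integral_le_of_norm_le (h2.const_mul _) ?_
    filter_upwards [h0] with x hx
    have hrw : Complex.I * s * x = ((s * x : ℝ) : ℂ) * Complex.I := by push_cast; ring
    rw [Complex.norm_eq_abs, hrw]
    calc Complex.abs (Complex.exp (((s*x:ℝ):ℂ) * Complex.I) - 1
          - ((s*x:ℝ):ℂ) * Complex.I * Complex.exp (((s*x:ℝ):ℂ) * Complex.I))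
        ≤ (s * x) ^ 2 / 2 := aux_key (s * x) (mul_nonneg hs hx)
      _ = s ^ 2 / 2 * x ^ 2 := by ring
  have hm : ∫ x, (s ^ 2 / 2 * x ^ 2) ∂μ = s ^ 2 / 2 * moment μ 2 := by
    rw [MeasureTheory.integral_const_mul]
    rfl
  rw [hm] at hb
  exact mul_le_mul_of_nonneg_left hb hlam

end meas3

/-- The quantity `κ₁(s; μ)` of Lemma 3.4:
`κ₁ = (s(1−ρ)/φ(−s)) ( φ′(0)(sφ(s) − s²φ′(s))/φ(s)³ + sφ′(0)λm₂/(2φ(s)(1−ρ)²) )`. -/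
noncomputable def kappa1 (lam : ℝ) (μ : Measure ℝ) (s : ℝ) : ℂ :=
  ((s : ℂ) * ((1 : ℂ) - lam * moment μ 1) / phi lam μ (-s)) *
    (phiDeriv lam μ 0 * ((s : ℂ) * phi lam μ s - (s : ℂ) ^ 2 * phiDeriv lam μ s)
        / (phi lam μ s) ^ 3 +
      (s : ℂ) * phiDeriv lam μ 0 * lam * moment μ 2 /
        (2 * phi lam μ s * ((1 : ℂ) - lam * moment μ 1) ^ 2))

set_option maxHeartbeats 1000000 in
/-- For fixed `λ > 0`, `δ ∈ (0,1)` and `M ∈ (0,∞)`, there is `0 < K₁ < ∞` with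
`|κ₁(s; μ)| ≤ K₁` for every `μ ∈ 𝒢(δ, M)` and every `s > 0`. -/
theorem kappa1_uniformly_bounded (lam : ℝ) (hlam : 0 < lam) (δ : ℝ)
    (hδ : δ ∈ Set.Ioo (0 : ℝ) 1) (M : ℝ) (hM : 0 < M) :
    ∃ K₁ : ℝ, 0 < K₁ ∧
      ∀ (μ : Measure ℝ), IsProbabilityMeasure μ → μ (Set.Ici 0) = 1 →
        Integrable (fun x => x) μ → Integrable (fun x => x ^ 2) μ →
        Integrable (fun x => x ^ 3) μ →
        lam * moment μ 1 ≤ 1 - δ → moment μ 3 ≤ M →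
        ∀ s : ℝ, 0 < s → ‖kappa1 lam μ s‖ ≤ K₁ := by
  obtain ⟨hδ0, hδ1⟩ := hδ
  refine ⟨lam * (1 + M) / δ ^ 4 + 1, ?_, ?_⟩
  · have h4 : (0:ℝ) < δ ^ 4 := by positivity
    have : 0 ≤ lam * (1 + M) / δ ^ 4 :=
      div_nonneg (mul_nonneg hlam.le (by linarith)) h4.le
    linarith
  intro μ hprob hsupp h1 h2 h3 hρ hm3 s hs
  haveI := hprob
  have h0 : ∀ᵐ x ∂μ, 0 ≤ x := aux_ae_nonneg μ hsupp
  -- moments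
  have hm1 : 0 ≤ moment μ 1 := by
    refine integral_nonneg_of_ae ?_
    filter_upwards [h0] with x hx
    simpa using hx
  have hm2n : 0 ≤ moment μ 2 := integral_nonneg fun x => by positivity
  have hm2le : moment μ 2 ≤ 1 + M := by
    have step : moment μ 2 ≤ ∫ x, (1 + x ^ 3) ∂μ := by
      refine integral_mono_ae h2 ((integrable_const 1).add h3) ?_
      filter_upwards [h0] with x hx
      nlinarith [mul_nonneg hx (sq_nonneg (x - 1)), sq_nonneg (x - 1)]
    have e : ∫ x, (1 + x ^ 3) ∂μ = 1 + moment μ 3 := by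
      rw [integral_add (integrable_const 1) h3, integral_const]
      simp [moment]
    rw [e] at step
    linarith
  have hr : δ ≤ 1 - lam * moment μ 1 := by linarith
  have hr1 : 1 - lam * moment μ 1 ≤ 1 := by nlinarith [mul_nonneg hlam.le hm1]
  have hrn : 0 ≤ 1 - lam * moment μ 1 := by linarith
  -- lower bounds on |phi|
  have hsin := aux_sin_int_le μ s hs.le h0 h1
  have k1 : lam * (∫ x, Real.sin (s * x) ∂μ) ≤ lam * (s * moment μ 1) :=
    mul_le_mul_of_nonneg_left hsin hlam.le
  have k2 : s * (lam * moment μ 1) ≤ s * (1 - δ) := mul_le_mul_of_nonneg_left hρ hs.le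
  have him_s : (phi lam μ s).im ≤ -(δ * s) := by
    rw [aux_phi_im]
    ring_nf at k1 k2 ⊢
    nlinarith
  have habs_s : δ * s ≤ Complex.abs (phi lam μ s) := by
    calc δ * s ≤ -(phi lam μ s).im := by linarith
      _ ≤ |(phi lam μ s).im| := neg_le_abs _
      _ ≤ Complex.abs (phi lam μ s) := Complex.abs_im_le_abs _
  have him_ns : δ * s ≤ (phi lam μ (-s)).im := by
    rw [aux_phi_im]
    have e : ∫ x, Real.sin (-s * x) ∂μ = - ∫ x, Real.sin (s * x) ∂μ := by
      simp only [neg_mul, Real.sin_neg, integral_neg]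
    rw [e]
    ring_nf at k1 k2 ⊢
    nlinarith
  have habs_ns : δ * s ≤ Complex.abs (phi lam μ (-s)) := by
    calc δ * s ≤ (phi lam μ (-s)).im := him_ns
      _ ≤ |(phi lam μ (-s)).im| := le_abs_self _
      _ ≤ Complex.abs (phi lam μ (-s)) := Complex.abs_im_le_abs _
  have hA0 : (0:ℝ) < Complex.abs (phi lam μ s) := lt_of_lt_of_le (by positivity) habs_s
  have hB0 : (0:ℝ) < Complex.abs (phi lam μ (-s)) := lt_of_lt_of_le (by positivity) habs_ns
  -- phiDeriv at 0
  have habsp0 : Complex.abs (phiDeriv lam μ 0) = 1 - lam * moment μ 1 := by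
    rw [aux_phiDeriv_zero μ lam h1, map_mul, Complex.abs_I, mul_one]
    have e : ((lam:ℂ) * ((moment μ 1 : ℝ):ℂ) - 1) = (((lam * moment μ 1 - 1 : ℝ)):ℂ) := by
      push_cast; ring
    rw [e, Complex.abs_ofReal, abs_of_nonpos (by linarith)]
    ring
  have hc : ((1:ℂ) - (lam:ℂ) * ((moment μ 1 : ℝ):ℂ)) = (((1 - lam * moment μ 1 : ℝ)):ℂ) := by
    push_cast; ring
  have habsD := aux_D_bound μ lam s hs.le h0 hlam.le h1 h2
  have haDn : 0 ≤ Complex.abs (phi lam μ s - (s:ℂ) * phiDeriv lam μ s) :=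
    AbsoluteValue.nonneg _ _
  -- prefactor bound
  have hP : Complex.abs ((s : ℂ) * ((1 : ℂ) - lam * moment μ 1) / phi lam μ (-s)) ≤ 1 / δ := by
    rw [map_div₀, map_mul, hc, Complex.abs_ofReal, Complex.abs_ofReal, abs_of_pos hs,
      abs_of_nonneg hrn]
    refine le_trans (div_le_div₀ (le_of_lt hs) ?_ (by positivity) habs_ns) (le_of_eq ?_)
    · nlinarith
    · field_simp
  -- term 1
  have hT1 : Complex.abs (phiDeriv lam μ 0 *
      ((s : ℂ) * phi lam μ s - (s : ℂ) ^ 2 * phiDeriv lam μ s) / (phi lam μ s) ^ 3)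
      ≤ lam * moment μ 2 / (2 * δ ^ 3) := by
    have hnum' : (s : ℂ) * phi lam μ s - (s : ℂ) ^ 2 * phiDeriv lam μ s
        = (s : ℂ) * (phi lam μ s - (s : ℂ) * phiDeriv lam μ s) := by ring
    rw [hnum', map_div₀, map_mul, map_mul, map_pow, habsp0, Complex.abs_ofReal, abs_of_pos hs]
    refine le_trans (div_le_div₀ (c := lam * s ^ 3 * moment μ 2 / 2) (d := (δ * s) ^ 3)
      ?_ ?_ ?_ ?_) (le_of_eq ?_)
    · exact div_nonneg (mul_nonneg (mul_nonneg hlam.le (by positivity)) hm2n) (by norm_num)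
    · nlinarith [mul_le_mul_of_nonneg_left habsD hs.le,
        mul_nonneg (mul_nonneg hlam.le hm1) (mul_nonneg hs.le haDn)]
    · positivity
    · exact pow_le_pow_left₀ (by positivity) habs_s 3
    · field_simp
  -- term 2
  have hT2 : Complex.abs ((s : ℂ) * phiDeriv lam μ 0 * lam * moment μ 2 /
      (2 * phi lam μ s * ((1 : ℂ) - lam * moment μ 1) ^ 2))
      ≤ lam * moment μ 2 / (2 * δ ^ 3) := by
    rw [hc, map_div₀]
    simp only [map_mul, map_pow, habsp0, Complex.abs_ofReal, Complex.abs_two]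
    rw [abs_of_pos hs, abs_of_nonneg hlam.le, abs_of_nonneg hm2n, abs_of_nonneg hrn]
    refine le_trans (div_le_div₀ (c := lam * s * moment μ 2) (d := 2 * (δ * s) * δ ^ 2)
      ?_ ?_ ?_ ?_) (le_of_eq ?_)
    · exact mul_nonneg (mul_nonneg hlam.le hs.le) hm2n
    · nlinarith [mul_nonneg (mul_nonneg hlam.le hs.le) hm2n]
    · positivity
    · have hr2 : δ ^ 2 ≤ (1 - lam * moment μ 1) ^ 2 := by nlinarith
      nlinarith [mul_le_mul habs_s hr2 (by positivity) hA0.le]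
    · field_simp
  -- assemble
  rw [Complex.norm_eq_abs, kappa1, map_mul]
  have hsum := (Complex.abs.add_le _ _).trans (add_le_add hT1 hT2)
  have hmain := mul_le_mul hP hsum (AbsoluteValue.nonneg _ _) (by positivity)
  refine hmain.trans ?_
  have e : (1 / δ) * (lam * moment μ 2 / (2 * δ ^ 3) + lam * moment μ 2 / (2 * δ ^ 3))
      = lam * moment μ 2 / δ ^ 4 := by
    field_simp
    ring
  rw [e]
  have : lam * moment μ 2 / δ ^ 4 ≤ lam * (1 + M) / δ ^ 4 := by gcongr
  linarith
end

section
/- Let λ > 0 and let μ be a probability measure on ℝ with μ([0,∞)) = 1, ρ = λ m₁ < 1, and m₂ < ∞. Then for every v ≥ 0, the limit as q → 0⁺ of (1/q) · ( q · exp(−ψ(q) v) / ψ(q) − (1 − ρ) ) exists and equals λ m₂ / (2(1 − ρ)) − v. (This is the analytic core of Lemma 3.5 of the paper: the cumulative deviation of the conditional idleness probabilities of the Poisson-sampled M/G/1 workload started at v from the stationary idleness probability 1 − ρ equals ξ times this limit.) -/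
open MeasureTheory Filter Set

/-- The Laplace exponent `ℓ(z) = λ(∫ exp(−z x) dμ(x) − 1) + z` of the net input process. -/
noncomputable def ell (lam : ℝ) (μ : Measure ℝ) (z : ℝ) : ℝ :=
  lam * ((∫ x, Real.exp (-(z * x)) ∂μ) - 1) + z

lemma exp1 (t : ℝ) : 1 - t ≤ Real.exp (-t) := by
  linarith [Real.add_one_le_exp (-t)]

lemma exp2 {t : ℝ} (ht : 0 ≤ t) : |Real.exp (-t) - 1 + t| ≤ t ^ 2 := by
  rw [abs_le]
  constructor
  · nlinarith [exp1 t, sq_nonneg t]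
  · rcases le_total t 1 with h | h
    · have h2 := Real.abs_exp_sub_one_sub_id_le (x := -t)
        (by rwa [abs_neg, abs_of_nonneg ht])
      have := abs_le.mp h2
      nlinarith [this.2]
    · have h1 : Real.exp (-t) ≤ 1 := by
        simpa using Real.exp_le_exp.mpr (neg_nonpos.mpr ht)
      nlinarith

lemma exp3 {t : ℝ} (ht : |t| ≤ 1) :
    |Real.exp (-t) - 1 + t - t ^ 2 / 2| ≤ |t| ^ 3 * (2 / 9) := by
  have h := Real.exp_bound (x := -t) (by rwa [abs_neg]) (n := 3) (by norm_num)
  simp [Finset.sum_range_succ] at h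
  have : Real.exp (-t) - 1 + t - t ^ 2 / 2 = Real.exp (-t) - (1 + -t + (-t)^2/2) := by ring
  rw [this]
  calc |Real.exp (-t) - (1 + -t + (-t)^2/2)| ≤ |(-t)| ^ 3 * (↑(Nat.succ 3) / (↑(Nat.factorial 3) * 3)) := by
        convert h using 2 <;> norm_num
    _ = |t| ^ 3 * (2/9) := by rw [abs_neg]; norm_num [Nat.factorial]

lemma ptwise (x : ℝ) :
    Tendsto (fun z : ℝ => (Real.exp (-(z * x)) - 1 + z * x) / z ^ 2)
      (nhdsWithin 0 (Set.Ioi 0)) (nhds (x ^ 2 / 2)) := by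
  have hdiff : Tendsto (fun z : ℝ =>
      (Real.exp (-(z * x)) - 1 + z * x) / z ^ 2 - x ^ 2 / 2)
      (nhdsWithin 0 (Set.Ioi 0)) (nhds 0) := by
    apply squeeze_zero_norm' (a := fun z => z * (|x| ^ 3 * (2 / 9)))
    · rcases eq_or_ne x 0 with hx | hx
      · filter_upwards [self_mem_nhdsWithin] with z hz
        simp [hx]
      · have hmem : Set.Ioc (0:ℝ) (1 / |x|) ∈ nhdsWithin 0 (Set.Ioi 0) :=
          Ioc_mem_nhdsGT_of_mem ⟨le_refl 0, by positivity⟩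
        filter_upwards [hmem] with z hz
        obtain ⟨hz0, hz1⟩ := hz
        have hzx : |z * x| ≤ 1 := by
          rw [abs_mul, abs_of_pos hz0]
          rw [le_div_iff₀ (by positivity)] at hz1
          linarith
        have h3 := exp3 hzx
        have heq : (Real.exp (-(z * x)) - 1 + z * x) / z ^ 2 - x ^ 2 / 2
            = (Real.exp (-(z * x)) - 1 + z * x - (z * x) ^ 2 / 2) / z ^ 2 := by
          field_simp
        rw [heq, Real.norm_eq_abs, abs_div, abs_of_pos (by positivity : (0:ℝ) < z ^ 2)]
        rw [div_le_iff₀ (by positivity)]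
        calc |Real.exp (-(z * x)) - 1 + z * x - (z * x) ^ 2 / 2|
            ≤ |z * x| ^ 3 * (2 / 9) := h3
          _ = z * (|x| ^ 3 * (2 / 9)) * z ^ 2 := by
              rw [abs_mul, abs_of_pos hz0]; ring
    · have : Tendsto (fun z : ℝ => z * (|x| ^ 3 * (2 / 9))) (nhds 0)
          (nhds (0 * (|x| ^ 3 * (2 / 9)))) := (tendsto_id).mul_const _
      simpa using this.mono_left nhdsWithin_le_nhds
  have := hdiff.add_const (x ^ 2 / 2)
  simpa using this

lemma dct (μ : Measure ℝ) [IsProbabilityMeasure μ]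
    (h2 : Integrable (fun x => x ^ 2) μ)
    (hae : ∀ᵐ x ∂μ, (0:ℝ) ≤ x) :
    Tendsto (fun z : ℝ => ∫ x, (Real.exp (-(z * x)) - 1 + z * x) / z ^ 2 ∂μ)
      (nhdsWithin 0 (Set.Ioi 0)) (nhds (moment μ 2 / 2)) := by
  have hlim : ∀ᵐ x ∂μ, Tendsto (fun z : ℝ =>
      (Real.exp (-(z * x)) - 1 + z * x) / z ^ 2)
      (nhdsWithin 0 (Set.Ioi 0)) (nhds (x ^ 2 / 2)) :=
    Filter.Eventually.of_forall fun x => ptwise x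
  have key := MeasureTheory.tendsto_integral_filter_of_dominated_convergence
    (μ := μ) (F := fun z x => (Real.exp (-(z * x)) - 1 + z * x) / z ^ 2)
    (f := fun x => x ^ 2 / 2) (bound := fun x => x ^ 2)
    (l := nhdsWithin 0 (Set.Ioi 0))
    (Filter.Eventually.of_forall fun z => by
      apply Continuous.aestronglyMeasurable
      continuity)
    (by
      filter_upwards [self_mem_nhdsWithin] with z hz
      have hz0 : (0:ℝ) < z := hz
      filter_upwards [hae] with x hx
      rw [Real.norm_eq_abs, abs_div, abs_of_pos (by positivity : (0:ℝ) < z ^ 2),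
        div_le_iff₀ (by positivity)]
      calc |Real.exp (-(z * x)) - 1 + z * x| ≤ (z * x) ^ 2 := exp2 (by positivity)
        _ = x ^ 2 * z ^ 2 := by ring)
    h2 hlim
  have : ∫ x, x ^ 2 / 2 ∂μ = moment μ 2 / 2 := by
    rw [moment, ← integral_div]
  rwa [this] at key


/-- Analytic core of Lemma 3.5: if `ρ = λ m₁ < 1` and `m₂ < ∞`, and `ψ` is the inverse on
`[0,∞)` of the Laplace exponent `ℓ`, then for every `v ≥ 0`,
`(1/q)( q exp(−ψ(q) v)/ψ(q) − (1 − ρ) ) → λ m₂ / (2(1 − ρ)) − v` as `q → 0⁺`. -/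
theorem tendsto_idleness_deviation (lam : ℝ) (hlam : 0 < lam) (μ : Measure ℝ)
    [IsProbabilityMeasure μ] (hsupp : μ (Set.Ici 0) = 1)
    (h1 : Integrable (fun x => x) μ) (h2 : Integrable (fun x => x ^ 2) μ)
    (hρ : lam * moment μ 1 < 1)
    (ψ : ℝ → ℝ) (hψmap : Set.MapsTo ψ (Set.Ici 0) (Set.Ici 0))
    (hψ : Set.InvOn ψ (ell lam μ) (Set.Ici 0) (Set.Ici 0))
    (v : ℝ) (hv : 0 ≤ v) :
    Filter.Tendsto
      (fun q : ℝ =>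
        (1 / q) * (q * Real.exp (-(ψ q * v)) / ψ q - (1 - lam * moment μ 1)))
      (nhdsWithin 0 (Set.Ioi 0))
      (nhds (lam * moment μ 2 / (2 * (1 - lam * moment μ 1)) - v)) := by
  have hρ' : 0 < 1 - lam * moment μ 1 := by linarith
  -- a.e. nonneg
  have hae : ∀ᵐ x ∂μ, (0:ℝ) ≤ x := by
    have hc : μ (Set.Ici (0:ℝ))ᶜ = 0 := by
      rw [measure_compl measurableSet_Ici (measure_ne_top _ _), hsupp, measure_univ]
      simp
    rw [ae_iff]
    have hset : {x : ℝ | ¬ (0:ℝ) ≤ x} = (Set.Ici (0:ℝ))ᶜ := by ext x; simp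
    rw [hset]; exact hc
  -- m1 formula
  have hm1 : moment μ 1 = ∫ x, x ∂μ := by
    rw [moment]; simp
  -- integrability of exp
  have hint_exp : ∀ z : ℝ, 0 ≤ z → Integrable (fun x => Real.exp (-(z * x))) μ := by
    intro z hz
    apply Integrable.mono' (integrable_const 1)
    · exact (Real.continuous_exp.comp (continuous_const.mul continuous_id).neg).aestronglyMeasurable
    · filter_upwards [hae] with x hx
      rw [Real.norm_eq_abs, abs_of_pos (Real.exp_pos _)]
      calc Real.exp (-(z * x)) ≤ Real.exp 0 :=
            Real.exp_le_exp.mpr (neg_nonpos.mpr (mul_nonneg hz hx))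
        _ = 1 := Real.exp_zero
  -- bounds on ell
  have hell_le : ∀ z : ℝ, 0 ≤ z → ell lam μ z ≤ z := by
    intro z hz
    have hle : ∫ x, Real.exp (-(z * x)) ∂μ ≤ ∫ _x, (1:ℝ) ∂μ := by
      apply integral_mono_ae (hint_exp z hz) (integrable_const 1)
      filter_upwards [hae] with x hx
      calc Real.exp (-(z * x)) ≤ Real.exp 0 :=
            Real.exp_le_exp.mpr (neg_nonpos.mpr (mul_nonneg hz hx))
        _ = 1 := Real.exp_zero
    simp only [integral_const, measure_univ, probReal_univ, smul_eq_mul, one_mul] at hle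
    have : lam * ((∫ x, Real.exp (-(z * x)) ∂μ) - 1) ≤ 0 := by
      apply mul_nonpos_of_nonneg_of_nonpos (le_of_lt hlam)
      linarith
    rw [ell]; linarith
  have hell_ge : ∀ z : ℝ, 0 ≤ z → (1 - lam * moment μ 1) * z ≤ ell lam μ z := by
    intro z hz
    have hge : ∫ x, (1 - z * x) ∂μ ≤ ∫ x, Real.exp (-(z * x)) ∂μ := by
      apply integral_mono ((integrable_const 1).sub (h1.const_mul z)) (hint_exp z hz)
      intro x
      simpa using exp1 (z * x)
    have heval : ∫ x, (1 - z * x) ∂μ = 1 - z * moment μ 1 := by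
      rw [integral_sub (integrable_const 1) (h1.const_mul z), integral_const,
        integral_const_mul, hm1]
      simp
    rw [heval] at hge
    rw [ell]
    nlinarith
  have hell0 : ell lam μ 0 = 0 := by
    simp [ell]
  -- ψ facts
  have hellψ : ∀ q : ℝ, 0 < q → ell lam μ (ψ q) = q := fun q hq =>
    hψ.2 (le_of_lt hq)
  have hψpos : ∀ q : ℝ, 0 < q → 0 < ψ q := by
    intro q hq
    have hmem : ψ q ∈ Set.Ici (0:ℝ) := hψmap (le_of_lt hq)
    rcases lt_or_eq_of_le (Set.mem_Ici.mp hmem) with h | h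
    · exact h
    · exfalso
      have := hellψ q hq
      rw [← h, hell0] at this
      linarith
  have hψ_ub : ∀ q : ℝ, 0 < q → ψ q ≤ q / (1 - lam * moment μ 1) := by
    intro q hq
    have := hell_ge (ψ q) (le_of_lt (hψpos q hq))
    rw [hellψ q hq] at this
    rw [le_div_iff₀ hρ']
    linarith
  have hψ_lb : ∀ q : ℝ, 0 < q → q ≤ ψ q := by
    intro q hq
    have := hell_le (ψ q) (le_of_lt (hψpos q hq))
    rw [hellψ q hq] at this
    exact this
  have hψtendsto : Tendsto ψ (nhdsWithin 0 (Set.Ioi 0)) (nhdsWithin 0 (Set.Ioi 0)) := by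
    have hq0 : Tendsto (fun q : ℝ => q) (nhdsWithin 0 (Set.Ioi 0)) (nhds 0) :=
      tendsto_id.mono_left nhdsWithin_le_nhds
    have hq1 : Tendsto (fun q : ℝ => q / (1 - lam * moment μ 1))
        (nhdsWithin 0 (Set.Ioi 0)) (nhds 0) := by
      simpa using hq0.div_const (1 - lam * moment μ 1)
    rw [tendsto_nhdsWithin_iff]
    refine ⟨tendsto_of_tendsto_of_tendsto_of_le_of_le' hq0 hq1 ?_ ?_, ?_⟩
    · filter_upwards [self_mem_nhdsWithin] with q hq
      exact hψ_lb q hq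
    · filter_upwards [self_mem_nhdsWithin] with q hq
      exact hψ_ub q hq
    · filter_upwards [self_mem_nhdsWithin] with q hq
      exact hψpos q hq
  -- the remainder term
  have hI := dct μ h2 hae
  have hr : ∀ z : ℝ, 0 < z →
      lam * ∫ x, (Real.exp (-(z * x)) - 1 + z * x) / z ^ 2 ∂μ
        = (ell lam μ z - (1 - lam * moment μ 1) * z) / z ^ 2 := by
    intro z hz
    have hsplit : ∫ x, (Real.exp (-(z * x)) - 1 + z * x) ∂μ
        = (∫ x, Real.exp (-(z * x)) ∂μ) - 1 + z * moment μ 1 := by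
      have ha : Integrable (fun x => Real.exp (-(z * x)) - 1) μ :=
        (hint_exp z hz.le).sub (integrable_const 1)
      rw [integral_add ha (h1.const_mul z),
        integral_sub (hint_exp z hz.le) (integrable_const 1), integral_const,
        integral_const_mul, hm1]
      simp
    rw [integral_div, hsplit, ell]
    field_simp
    ring
  -- limits
  have hT1 : Tendsto (fun z : ℝ => ell lam μ z / z) (nhdsWithin 0 (Set.Ioi 0))
      (nhds (1 - lam * moment μ 1)) := by
    have hzero : Tendsto (fun z : ℝ =>
        (1 - lam * moment μ 1) +
          (lam * ∫ x, (Real.exp (-(z * x)) - 1 + z * x) / z ^ 2 ∂μ) * z)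
        (nhdsWithin 0 (Set.Ioi 0)) (nhds (1 - lam * moment μ 1)) := by
      have hmul : Tendsto (fun z : ℝ =>
          (lam * ∫ x, (Real.exp (-(z * x)) - 1 + z * x) / z ^ 2 ∂μ) * z)
          (nhdsWithin 0 (Set.Ioi 0)) (nhds 0) := by
        have hz : Tendsto (fun z : ℝ => z) (nhdsWithin 0 (Set.Ioi 0)) (nhds 0) :=
          tendsto_id.mono_left nhdsWithin_le_nhds
        have := (hI.const_mul lam).mul hz
        simpa using this
      have := (tendsto_const_nhds (x := (1 - lam * moment μ 1))
        (f := nhdsWithin (0:ℝ) (Set.Ioi 0))).add hmul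
      simpa using this
    apply hzero.congr'
    filter_upwards [self_mem_nhdsWithin] with z hz
    have hz0 : (0:ℝ) < z := hz
    rw [hr z hz0]
    field_simp
    ring
  have hT2 : Tendsto (fun z : ℝ => z / ell lam μ z) (nhdsWithin 0 (Set.Ioi 0))
      (nhds (1 - lam * moment μ 1)⁻¹) := by
    simpa only [inv_div] using hT1.inv₀ hρ'.ne'
  have hexp1 : Tendsto (fun z : ℝ => Real.exp (-(z * v))) (nhdsWithin 0 (Set.Ioi 0))
      (nhds 1) := by
    have : Continuous fun z : ℝ => Real.exp (-(z * v)) := by continuity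
    have := this.tendsto 0
    simp only [zero_mul, neg_zero, Real.exp_zero] at this
    exact this.mono_left nhdsWithin_le_nhds
  have hslope : Tendsto (fun z : ℝ => (Real.exp (-(z * v)) - 1) / z)
      (nhdsWithin 0 (Set.Ioi 0)) (nhds (-v)) := by
    have hd0 : HasDerivAt (fun z : ℝ => -(z * v)) (-v) 0 := by
      exact (((hasDerivAt_id' (0:ℝ)).mul_const v).neg).congr_deriv (by ring)
    have hd : HasDerivAt (fun z : ℝ => Real.exp (-(z * v))) (-v) 0 := by
      have := (Real.hasDerivAt_exp (-(0 * v))).comp 0 hd0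
      simpa [Function.comp_def] using this
    have hs := hasDerivAt_iff_tendsto_slope.mp hd
    have hmono : nhdsWithin (0:ℝ) (Set.Ioi 0) ≤ nhdsWithin 0 {(0:ℝ)}ᶜ :=
      nhdsWithin_mono 0 (fun x hx => ne_of_gt hx)
    have := hs.mono_left hmono
    apply this.congr'
    filter_upwards [self_mem_nhdsWithin] with z hz
    simp [slope_def_field, Real.exp_zero]
  -- the limit along z
  have hG : Tendsto (fun z : ℝ =>
      (1 / ell lam μ z) * (ell lam μ z * Real.exp (-(z * v)) / z
        - (1 - lam * moment μ 1)))
      (nhdsWithin 0 (Set.Ioi 0))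
      (nhds (lam * moment μ 2 / (2 * (1 - lam * moment μ 1)) - v)) := by
    have hH : Tendsto (fun z : ℝ =>
        (1 - lam * moment μ 1) * ((Real.exp (-(z * v)) - 1) / z) * (z / ell lam μ z)
          + (lam * ∫ x, (Real.exp (-(z * x)) - 1 + z * x) / z ^ 2 ∂μ)
            * Real.exp (-(z * v)) * (z / ell lam μ z))
        (nhdsWithin 0 (Set.Ioi 0))
        (nhds ((1 - lam * moment μ 1) * (-v) * (1 - lam * moment μ 1)⁻¹
          + lam * (moment μ 2 / 2) * 1 * (1 - lam * moment μ 1)⁻¹)) :=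
      (((tendsto_const_nhds.mul hslope).mul hT2).add
        (((hI.const_mul lam).mul hexp1).mul hT2))
    have hval : (1 - lam * moment μ 1) * (-v) * (1 - lam * moment μ 1)⁻¹
        + lam * (moment μ 2 / 2) * 1 * (1 - lam * moment μ 1)⁻¹
        = lam * moment μ 2 / (2 * (1 - lam * moment μ 1)) - v := by
      field_simp
      ring
    rw [hval] at hH
    apply hH.congr'
    filter_upwards [self_mem_nhdsWithin] with z hz
    have hz0 : (0:ℝ) < z := hz
    have hellpos : 0 < ell lam μ z := lt_of_lt_of_le (by positivity) (hell_ge z hz0.le)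
    rw [hr z hz0]
    field_simp
    ring
  -- compose with ψ
  have hcomp := hG.comp hψtendsto
  apply hcomp.congr'
  filter_upwards [self_mem_nhdsWithin] with q hq
  have hq0 : (0:ℝ) < q := hq
  simp only [Function.comp]
  rw [hellψ q hq0]
end

section
/- Let ξ > 0, a ∈ ℂ, and let F : (0,∞) → ℂ be measurable with |F(t)| ≤ M₃ for all t > 0 (for some M₃ < ∞) and |F(t) − a| ≤ c t^{−2} for all t > 0 (for some c < ∞). For k ≥ 1, let I_k = ∫₀^∞ (ξ^k t^{k−1} e^{−ξ t} / (k−1)!) F(t) dt (the expectation of F under the Erlang(k, ξ) distribution). Then for every k ≥ 3, |I_k − a| ≤ c ξ² / ((k−1)(k−2)), and consequently the series ∑_{k=1}^∞ |I_k − a| converges. (This is the analytic core of Lemma 3.2 of the paper: quadratic-rate convergence of the continuous-time workload implies summability of the deviations of the Poisson-sampled chain from stationarity.) -/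
open MeasureTheory

lemma erlang_int_eq (n : ℕ) {ξ : ℝ} (hξ : 0 < ξ) :
    ∫ t in Set.Ioi (0:ℝ), t ^ n * Real.exp (-(ξ * t)) = n.factorial / ξ ^ (n + 1) := by
  have h := Real.integral_rpow_mul_exp_neg_mul_Ioi (a := (n : ℝ) + 1) (by positivity) hξ
  rw [show ((n:ℝ) + 1) - 1 = (n : ℝ) by ring] at h
  simp_rw [Real.rpow_natCast] at h
  rw [h, show ((n:ℝ) + 1) = ((n + 1 : ℕ) : ℝ) by push_cast; ring, Real.rpow_natCast,
    show ((n + 1 : ℕ) : ℝ) = (n:ℝ) + 1 by push_cast; ring, Real.Gamma_nat_eq_factorial,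
    div_pow, one_pow]
  ring

lemma erlang_int_integrable (n : ℕ) {ξ : ℝ} (hξ : 0 < ξ) :
    IntegrableOn (fun t : ℝ => t ^ n * Real.exp (-(ξ * t))) (Set.Ioi 0) := by
  have h := integrableOn_rpow_mul_exp_neg_mul_rpow (s := (n:ℝ)) (p := 1)
    (neg_one_lt_zero.trans_le (Nat.cast_nonneg n)) zero_lt_one hξ
  refine h.congr_fun (fun t ht => ?_) measurableSet_Ioi
  dsimp only
  rw [Real.rpow_one, Real.rpow_natCast, neg_mul]

lemma erlang_key (ξ : ℝ) (hξ : 0 < ξ) (a : ℂ) (F : ℝ → ℂ) (hF : Measurable F)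
    (M₃ : ℝ) (hM₃ : ∀ t : ℝ, 0 < t → ‖F t‖ ≤ M₃)
    (c : ℝ) (hc : ∀ t : ℝ, 0 < t → ‖F t - a‖ ≤ c / t ^ 2) (n : ℕ) :
    ‖(∫ t in Set.Ioi (0 : ℝ),
          ((ξ ^ (n + 3) * t ^ (n + 2) * Real.exp (-(ξ * t)) / (Nat.factorial (n + 2)) : ℝ) : ℂ)
            * F t) - a‖
      ≤ c * ξ ^ 2 / (((n : ℝ) + 2) * ((n : ℝ) + 1)) := by
  set C : ℝ := ξ ^ (n + 3) / (n + 2).factorial with hC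
  have hC0 : 0 < C := by positivity
  set ρ : ℝ → ℝ := fun t => ξ ^ (n + 3) * t ^ (n + 2) * Real.exp (-(ξ * t)) / (n + 2).factorial
    with hρ
  have hρ_eq : ∀ t : ℝ, ρ t = C * (t ^ (n + 2) * Real.exp (-(ξ * t))) := fun t => by
    rw [hρ, hC]; ring
  have hρ_nonneg : ∀ t : ℝ, 0 < t → 0 ≤ ρ t := fun t ht => by
    rw [hρ_eq]; positivity
  have hρmeas : Measurable ρ := by
    apply Measurable.div_const
    exact ((measurable_const.mul (measurable_id.pow_const _)).mul
      ((measurable_const.mul measurable_id).neg.exp))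
  have hρint : IntegrableOn ρ (Set.Ioi 0) := by
    have h1 := (erlang_int_integrable (n + 2) hξ).const_mul C
    exact MeasureTheory.IntegrableOn.congr_fun h1 (fun t _ => (hρ_eq t).symm) measurableSet_Ioi
  have hρ_one : ∫ t in Set.Ioi (0:ℝ), ρ t = 1 := by
    simp_rw [hρ_eq]
    rw [integral_const_mul, erlang_int_eq (n + 2) hξ, hC]
    have h1 : (ξ : ℝ) ^ (n + 2 + 1) = ξ ^ (n + 3) := by ring
    rw [h1]
    field_simp
  -- integrability of ρ * F
  have hmeas2 : AEStronglyMeasurable (fun t : ℝ => ((ρ t : ℝ) : ℂ) * F t)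
      (volume.restrict (Set.Ioi 0)) :=
    ((Complex.measurable_ofReal.comp hρmeas).mul hF).aestronglyMeasurable
  have hFint : IntegrableOn (fun t : ℝ => ((ρ t : ℝ) : ℂ) * F t) (Set.Ioi 0) := by
    refine Integrable.mono' (hρint.mul_const M₃) hmeas2 ?_
    filter_upwards [ae_restrict_mem measurableSet_Ioi] with t ht
    rw [norm_mul, Complex.norm_real, Real.norm_eq_abs, abs_of_nonneg (hρ_nonneg t ht)]
    exact mul_le_mul_of_nonneg_left (hM₃ t ht) (hρ_nonneg t ht)
  have haint : IntegrableOn (fun t : ℝ => ((ρ t : ℝ) : ℂ) * a) (Set.Ioi 0) :=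
    hρint.ofReal.mul_const a
  have hsub : (∫ t in Set.Ioi (0:ℝ), ((ρ t : ℝ) : ℂ) * F t) - a
      = ∫ t in Set.Ioi (0:ℝ), ((ρ t : ℝ) : ℂ) * (F t - a) := by
    have h0 : ∫ t in Set.Ioi (0:ℝ), ((ρ t : ℝ) : ℂ) * a = a := by
      have hco : (∫ t in Set.Ioi (0:ℝ), ((ρ t : ℝ) : ℂ)) = ((1:ℝ):ℂ) := by
        rw [← hρ_one]; exact integral_ofReal
      rw [integral_mul_const, hco]
      simp
    have h2 : (∫ t in Set.Ioi (0:ℝ), ((ρ t : ℝ) : ℂ) * (F t - a))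
        = (∫ t in Set.Ioi (0:ℝ), ((ρ t : ℝ) : ℂ) * F t)
          - ∫ t in Set.Ioi (0:ℝ), ((ρ t : ℝ) : ℂ) * a := by
      rw [← MeasureTheory.integral_sub hFint haint]
      congr 1; funext t; ring
    rw [h2, h0]
  rw [hsub]
  have hbound : ‖∫ t in Set.Ioi (0:ℝ), ((ρ t : ℝ) : ℂ) * (F t - a)‖
      ≤ ∫ t in Set.Ioi (0:ℝ), C * c * (t ^ n * Real.exp (-(ξ * t))) := by
    refine MeasureTheory.norm_integral_le_of_norm_le
      ((erlang_int_integrable n hξ).const_mul (C * c)) ?_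
    filter_upwards [ae_restrict_mem measurableSet_Ioi] with t ht
    rw [norm_mul, Complex.norm_real, Real.norm_eq_abs, abs_of_nonneg (hρ_nonneg t ht)]
    calc ρ t * ‖F t - a‖ ≤ ρ t * (c / t ^ 2) :=
          mul_le_mul_of_nonneg_left (hc t ht) (hρ_nonneg t ht)
      _ = C * c * (t ^ n * Real.exp (-(ξ * t))) := by
          rw [hρ_eq]
          have ht0 : (t : ℝ) ≠ 0 := ne_of_gt ht
          field_simp
          ring
  refine hbound.trans (le_of_eq ?_)
  rw [integral_const_mul, erlang_int_eq n hξ, hC]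
  have hfact : ((n + 2).factorial : ℝ) = ((n : ℝ) + 2) * ((n : ℝ) + 1) * (n.factorial : ℝ) := by
    rw [Nat.factorial_succ, Nat.factorial_succ]
    push_cast; ring
  rw [hfact]
  have hξ0 : (ξ : ℝ) ≠ 0 := ne_of_gt hξ
  have hn1 : ((n : ℝ) + 1) ≠ 0 := by positivity
  have hn2 : ((n : ℝ) + 2) ≠ 0 := by positivity
  have hnf : (n.factorial : ℝ) ≠ 0 := by positivity
  field_simp
  ring

/-- Analytic core of Lemma 3.2: if `F` is bounded and converges to `a` at a quadratic rate,
then its Erlang`(k, ξ)` expectations `I_k` satisfy `|I_k − a| ≤ c ξ²/((k−1)(k−2))` for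
`k ≥ 3`, and `∑_{k=1}^∞ |I_k − a| < ∞`. -/
theorem erlang_expectation_deviation_summable (ξ : ℝ) (hξ : 0 < ξ) (a : ℂ)
    (F : ℝ → ℂ) (hF : Measurable F)
    (M₃ : ℝ) (hM₃ : ∀ t : ℝ, 0 < t → ‖F t‖ ≤ M₃)
    (c : ℝ) (hc : ∀ t : ℝ, 0 < t → ‖F t - a‖ ≤ c / t ^ 2) :
    (∀ k : ℕ, 3 ≤ k →
      ‖(∫ t in Set.Ioi (0 : ℝ),
            ((ξ ^ k * t ^ (k - 1) * Real.exp (-(ξ * t)) / (Nat.factorial (k - 1)) : ℝ) : ℂ)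
              * F t) - a‖
        ≤ c * ξ ^ 2 / (((k : ℝ) - 1) * ((k : ℝ) - 2))) ∧
    Summable (fun k : ℕ =>
      ‖(∫ t in Set.Ioi (0 : ℝ),
            ((ξ ^ (k + 1) * t ^ k * Real.exp (-(ξ * t)) / (Nat.factorial k) : ℝ) : ℂ)
              * F t) - a‖) := by
  have hc0 : 0 ≤ c := le_trans (norm_nonneg (F 1 - a)) (by simpa using hc 1 one_pos)
  constructor
  · intro k hk
    obtain ⟨n, rfl⟩ : ∃ n, k = n + 3 := ⟨k - 3, by omega⟩
    rw [show n + 3 - 1 = n + 2 from rfl,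
      show ((n + 3 : ℕ) : ℝ) - 1 = (n : ℝ) + 2 by push_cast; ring,
      show ((n + 3 : ℕ) : ℝ) - 2 = (n : ℝ) + 1 by push_cast; ring]
    exact erlang_key ξ hξ a F hF M₃ hM₃ c hc n
  · rw [← summable_nat_add_iff 2]
    have hmaj : Summable (fun k : ℕ => c * ξ ^ 2 / (((k : ℝ) + 2) * ((k : ℝ) + 1))) := by
      have h1 : Summable (fun k : ℕ => 1 / ((k : ℝ) + 1) ^ 2) := by
        have h0 : Summable (fun k : ℕ => 1 / ((k : ℝ)) ^ 2) :=
          Real.summable_one_div_nat_pow.mpr one_lt_two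
        have := (summable_nat_add_iff 1).2 h0
        refine this.congr fun k => ?_
        push_cast; ring
      refine Summable.of_nonneg_of_le (fun k => by positivity) (fun k => ?_)
        (h1.mul_left (c * ξ ^ 2))
      rw [div_eq_mul_one_div]
      refine mul_le_mul_of_nonneg_left ?_ (by positivity)
      refine one_div_le_one_div_of_le (by positivity) ?_
      nlinarith [Nat.cast_nonneg (α := ℝ) k]
    refine Summable.of_nonneg_of_le (fun k => norm_nonneg _) (fun k => ?_) hmaj
    exact erlang_key ξ hξ a F hF M₃ hM₃ c hc k
end

section
/- Let λ > 0 and let μ be a probability measure on ℝ with μ([0,∞)) = 1 and ρ = λ m₁ < 1. Then for every s > 0, (1 − ρ) / (1 + ρ) ≤ (1 − ρ) s / |φ(s)| ≤ 1. In particular, the modulus of the stationary workload characteristic function s φ′(0)/φ(s) given by the generalized Pollaczek–Khinchine formula is bounded below, uniformly in s > 0, by the positive constant (1 − ρ)/(1 + ρ). -/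
open MeasureTheory

lemma abs_exp_I_mul_sub_one_le (θ : ℝ) :
    ‖Complex.exp (Complex.I * θ) - 1‖ ≤ |θ| := by
  have hθI : Complex.I * (θ : ℂ) = (θ : ℂ) * Complex.I := by ring
  rw [hθI, ← Real.sqrt_sq_eq_abs, Complex.norm_def]
  apply Real.sqrt_le_sqrt
  have hre : (Complex.exp ((θ : ℂ) * Complex.I) - 1).re = Real.cos θ - 1 := by
    simp [Complex.exp_ofReal_mul_I_re]
  have him : (Complex.exp ((θ : ℂ) * Complex.I) - 1).im = Real.sin θ := by
    simp [Complex.exp_ofReal_mul_I_im]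
  rw [Complex.normSq_apply, hre, him]
  have h1 : 1 - θ ^ 2 / 2 ≤ Real.cos θ := Real.one_sub_sq_div_two_le_cos
  have h2 : Real.sin θ ^ 2 + Real.cos θ ^ 2 = 1 := Real.sin_sq_add_cos_sq θ
  have h3 : Real.cos θ ≤ 1 := Real.cos_le_one θ
  nlinarith

/-- If `ρ = λ m₁ < 1`, then for every `s > 0`,
`(1 − ρ)/(1 + ρ) ≤ (1 − ρ) s / |φ(s)| ≤ 1`, i.e. the modulus of the stationary workload
characteristic function `sφ′(0)/φ(s)` is uniformly bounded below by `(1 − ρ)/(1 + ρ)`. -/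
theorem stationary_cf_modulus_bounds (lam : ℝ) (hlam : 0 < lam)
    (μ : Measure ℝ) [IsProbabilityMeasure μ] (hsupp : μ (Set.Ici 0) = 1)
    (h1 : Integrable (fun x => x) μ) (hρ : lam * moment μ 1 < 1) :
    ∀ s : ℝ, 0 < s →
      (1 - lam * moment μ 1) / (1 + lam * moment μ 1)
          ≤ (1 - lam * moment μ 1) * s / ‖phi lam μ s‖ ∧
      (1 - lam * moment μ 1) * s / ‖phi lam μ s‖ ≤ 1 := by
  intro s hs
  set m := moment μ 1 with hm_def
  -- a.e. nonnegativity
  have hae : ∀ᵐ x ∂μ, 0 ≤ x := by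
    rw [ae_iff]
    have : {x : ℝ | ¬ 0 ≤ x} = (Set.Ici (0:ℝ))ᶜ := by
      ext x; simp [Set.mem_Ici]
    rw [this, measure_compl measurableSet_Ici (measure_ne_top _ _), hsupp, measure_univ]
    simp
  have hm_eq : m = ∫ x, x ∂μ := by simp [hm_def, moment]
  have hm : 0 ≤ m := by
    rw [hm_eq]; exact integral_nonneg_of_ae hae
  have hρ' : lam * m < 1 := hρ
  have h1ρ : 0 < 1 - lam * m := by linarith
  have h2ρ : 0 < 1 + lam * m := by positivity
  -- integrability of the exponential
  have hmeas : AEStronglyMeasurable (fun x : ℝ => Complex.exp (Complex.I * s * x)) μ := by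
    apply Continuous.aestronglyMeasurable
    exact Complex.continuous_exp.comp (by continuity)
  have hcast : ∀ x : ℝ, Complex.I * (s : ℂ) * (x : ℂ) = Complex.I * ((s * x : ℝ) : ℂ) := by
    intro x; push_cast; ring
  have hnorm1 : ∀ x : ℝ, ‖Complex.exp (Complex.I * s * x)‖ = 1 := by
    intro x
    rw [hcast x]
    have : Complex.I * ((s * x : ℝ) : ℂ) = ((s * x : ℝ) : ℂ) * Complex.I := by ring
    rw [this, Complex.norm_exp_ofReal_mul_I]
  have hexp : Integrable (fun x : ℝ => Complex.exp (Complex.I * s * x)) μ := by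
    apply Integrable.mono' (integrable_const (1 : ℝ)) hmeas
    filter_upwards with x
    rw [hnorm1 x]
  -- upper bound : |charFn μ s - 1| ≤ s * m
  have hsub : Integrable (fun x : ℝ => Complex.exp (Complex.I * s * x) - 1) μ :=
    hexp.sub (integrable_const 1)
  have hchar_sub : charFn μ s - 1 = ∫ x, (Complex.exp (Complex.I * s * x) - 1) ∂μ := by
    rw [integral_sub hexp (integrable_const 1), integral_const, probReal_univ]
    simp [charFn]
  have hsx_int : Integrable (fun x : ℝ => s * x) μ := h1.const_mul s
  have hsx_integral : ∫ x, s * x ∂μ = s * m := by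
    rw [hm_eq, ← integral_const_mul]
  have hub : ‖charFn μ s - 1‖ ≤ s * m := by
    rw [hchar_sub]
    calc ‖∫ x, (Complex.exp (Complex.I * s * x) - 1) ∂μ‖
        ≤ ∫ x, ‖Complex.exp (Complex.I * s * x) - 1‖ ∂μ := norm_integral_le_integral_norm _
      _ ≤ ∫ x, s * x ∂μ := by
          apply integral_mono_ae hsub.norm hsx_int
          filter_upwards [hae] with x hx
          rw [hcast x]
          calc ‖Complex.exp (Complex.I * ((s * x : ℝ) : ℂ)) - 1‖
              ≤ |s * x| := abs_exp_I_mul_sub_one_le (s * x)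
            _ = s * x := abs_of_nonneg (mul_nonneg hs.le hx)
      _ = s * m := hsx_integral
  have hphi_ub : ‖phi lam μ s‖ ≤ s * (1 + lam * m) := by
    have : phi lam μ s = (lam : ℂ) * (charFn μ s - 1) - Complex.I * s := rfl
    rw [this]
    calc ‖(lam : ℂ) * (charFn μ s - 1) - Complex.I * s‖
        ≤ ‖(lam : ℂ) * (charFn μ s - 1)‖ + ‖Complex.I * (s : ℂ)‖ := norm_sub_le _ _
      _ = lam * ‖charFn μ s - 1‖ + s := by
          simp [map_mul, Complex.norm_real,
            abs_of_nonneg hlam.le, abs_of_nonneg hs.le]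
      _ ≤ lam * (s * m) + s := by nlinarith
      _ = s * (1 + lam * m) := by ring
  -- lower bound : |phi| ≥ s * (1 - lam * m)
  have him_char : (charFn μ s).im = ∫ x, Real.sin (s * x) ∂μ := by
    have h := integral_im (𝕜 := ℂ) hexp
    simp only [RCLike.im_eq_complex_im] at h
    rw [charFn, ← h]
    congr 1
    ext x
    rw [hcast x]
    have : Complex.I * ((s * x : ℝ) : ℂ) = ((s * x : ℝ) : ℂ) * Complex.I := by ring
    rw [this, Complex.exp_ofReal_mul_I_im]
  have hsin_int : Integrable (fun x : ℝ => Real.sin (s * x)) μ := by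
    apply Integrable.mono' (integrable_const (1 : ℝ))
    · exact (Real.continuous_sin.comp (by continuity)).aestronglyMeasurable
    · filter_upwards with x
      rw [Real.norm_eq_abs]
      exact Real.abs_sin_le_one _
  have him_le : (charFn μ s).im ≤ s * m := by
    rw [him_char, ← hsx_integral]
    apply integral_mono_ae hsin_int hsx_int
    filter_upwards [hae] with x hx
    exact Real.sin_le (mul_nonneg hs.le hx)
  have hphi_im : (phi lam μ s).im = lam * (charFn μ s).im - s := by
    simp [phi, Complex.sub_im, Complex.mul_im, Complex.mul_re]
  have hphi_lb : s * (1 - lam * m) ≤ ‖phi lam μ s‖ := by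
    have h5 : (phi lam μ s).im ≤ -(s * (1 - lam * m)) := by
      rw [hphi_im]; nlinarith
    calc s * (1 - lam * m) ≤ |(phi lam μ s).im| :=
          le_abs.2 (Or.inr (by linarith))
      _ ≤ ‖phi lam μ s‖ := Complex.abs_im_le_norm _
  have habs_pos : 0 < ‖phi lam μ s‖ := by nlinarith
  constructor
  · rw [div_le_div_iff₀ h2ρ habs_pos]
    nlinarith
  · rw [div_le_one habs_pos]
    nlinarith
end
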